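/- Let u and n_1,...,n_u be positive integers and set n = n_1 + ··· + n_u. Then there exist pairwise disjoint subsets H^1,...,H^u of {1,...,n} whose union is all of {1,...,n}, such that for each i ∈ {1,...,u} the set H^i has cardinality n_i and the map h ↦ ⌈n_i·h/n⌉ is a bijection from H^i onto {1,...,n_i}. -/
import Mathlib

/-- The set of admissible positions for the `j`-th point (0-indexed) of slice `i`:
integers `h` with `j*n < (ni i)*h ≤ (j+1)*n`. -/
def fslhdSlot (u : ℕ) (ni : Fin u → ℕ) (n : ℕ) (σ : Σ i : Fin u, Fin (ni i)) : Finset ℕ :=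
  Finset.Ioc ((σ.2 : ℕ) * n / ni σ.1) (((σ.2 : ℕ) + 1) * n / ni σ.1)

lemma fslhdSlot_lt {u : ℕ} {ni : Fin u → ℕ} {n : ℕ}
    (σ : Σ i : Fin u, Fin (ni i)) (hd : 0 < ni σ.1) (hdn : ni σ.1 ≤ n) :
    (σ.2 : ℕ) * n / ni σ.1 < ((σ.2 : ℕ) + 1) * n / ni σ.1 := by
  set d := ni σ.1
  set j := (σ.2 : ℕ)
  calc j * n / d < j * n / d + 1 := Nat.lt_succ_self _
    _ = (j * n + d) / d := (Nat.add_div_right _ hd).symm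
    _ ≤ ((j + 1) * n) / d := by
        apply Nat.div_le_div_right
        have : (j + 1) * n = j * n + n := by ring
        omega

/-- Hall's condition for the slot system. -/
lemma fslhd_hall {u : ℕ} {ni : Fin u → ℕ} {n : ℕ} (hu : 0 < u)
    (hni : ∀ i, 0 < ni i) (hn : n = ∑ i, ni i) :
    ∀ s : Finset (Σ i : Fin u, Fin (ni i)),
      s.card ≤ (s.biUnion (fslhdSlot u ni n)).card := by
  have hn0 : 0 < n := by
    rw [hn]
    exact Finset.sum_pos (fun i _ => hni i) ⟨⟨0, hu⟩, Finset.mem_univ _⟩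
  have hdn : ∀ i, ni i ≤ n := by
    intro i
    rw [hn]
    exact Finset.single_le_sum (fun i _ => Nat.zero_le _) (Finset.mem_univ i)
  suffices H : ∀ k : ℕ, ∀ s : Finset (Σ i : Fin u, Fin (ni i)), s.card ≤ k →
      s.card ≤ (s.biUnion (fslhdSlot u ni n)).card by
    intro s; exact H s.card s le_rfl
  intro k
  induction k with
  | zero =>
    intro s hs
    have hse : s = ∅ := Finset.card_eq_zero.1 (Nat.le_zero.1 hs)
    subst hse
    simp
  | succ k ih =>
    intro s hs
    rcases s.eq_empty_or_nonempty with rfl | hsne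
    · simp
    set t := fslhdSlot u ni n with ht
    set B := s.biUnion t with hB
    have htsub : ∀ σ ∈ s, t σ ⊆ B := fun σ hσ => Finset.subset_biUnion_of_mem t hσ
    have hBne : B.Nonempty := by
      obtain ⟨σ, hσ⟩ := hsne
      have hb : ((σ.2 : ℕ) + 1) * n / ni σ.1 ∈ t σ :=
        Finset.mem_Ioc.2 ⟨fslhdSlot_lt σ (hni _) (hdn _), le_rfl⟩
      exact ⟨_, Finset.mem_biUnion.2 ⟨σ, hσ, hb⟩⟩
    have hBpos : ∀ b ∈ B, 0 < b := by
      intro b hb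
      obtain ⟨σ, _, hbσ⟩ := Finset.mem_biUnion.1 hb
      exact Nat.lt_of_le_of_lt (Nat.zero_le _) (Finset.mem_Ioc.1 hbσ).1
    set y := B.max' hBne with hy
    have hyB : y ∈ B := B.max'_mem hBne
    have hley : ∀ b ∈ B, b ≤ y := fun b hb => B.le_max' b hb
    -- x : the largest "gap" point below y (x ∉ B, everything in (x, y] is in B)
    set x := Nat.findGreatest (fun z => z ∉ B) y with hx
    have hxy : x ≤ y := Nat.findGreatest_le y
    have h0B : (0 : ℕ) ∉ B := fun h => absurd (hBpos 0 h) (lt_irrefl 0)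
    have hxnB : x ∉ B :=
      Nat.findGreatest_spec (P := fun z => z ∉ B) (Nat.zero_le y) h0B
    have hfill : ∀ z, x < z → z ≤ y → z ∈ B := by
      intro z h1 h2
      by_contra hzB
      exact Nat.findGreatest_is_greatest h1 h2 hzB
    have hxly : x < y := lt_of_le_of_ne hxy (fun h => hxnB (h ▸ hyB))
    -- split s according to whether the slot lies above the gap
    set s1 := s.filter (fun σ => x ≤ (σ.2 : ℕ) * n / ni σ.1) with hs1
    set s2 := s.filter (fun σ => ¬ x ≤ (σ.2 : ℕ) * n / ni σ.1) with hs2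
    have hcards : s1.card + s2.card = s.card := Finset.card_filter_add_card_filter_not _
    -- low slots lie entirely at or below x
    have hlow : ∀ σ ∈ s2, ∀ b ∈ t σ, b ≤ x := by
      intro σ hσ b hb
      have hσs : σ ∈ s := (Finset.mem_filter.1 hσ).1
      have ha : (σ.2 : ℕ) * n / ni σ.1 < x := by
        have := (Finset.mem_filter.1 hσ).2
        omega
      by_contra hbx
      have hxt : x ∈ t σ := by
        have hb' := Finset.mem_Ioc.1 hb
        exact Finset.mem_Ioc.2 ⟨ha, by omega⟩
      exact hxnB (htsub σ hσs hxt)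
    -- bound the size of s1 by counting fiberwise (the "window inequality")
    have hs1card : s1.card ≤ y - x := by
      have hfib : s1.card = ∑ i : Fin u, (s1.filter (fun σ => σ.1 = i)).card :=
        Finset.card_eq_sum_card_fiberwise (fun σ _ => Finset.mem_univ σ.1)
      have hper : ∀ i : Fin u,
          n * (s1.filter (fun σ => σ.1 = i)).card + 1 ≤ (y - x + 1) * ni i := by
        intro i
        set d := ni i with hd
        have hd0 : 0 < d := hni i
        set lo := (x * d + n - 1) / n with hlo
        set q := ((y + 1) * d - 1) / n with hq
        have hcard : (s1.filter (fun σ => σ.1 = i)).card ≤ q - lo := by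
          rw [← Nat.card_Ico lo q]
          apply Finset.card_le_card_of_injOn (fun σ => (σ.2 : ℕ))
          · intro σ hσ
            obtain ⟨hσ1, hσi⟩ := Finset.mem_filter.1 hσ
            obtain ⟨hσs, hσlo⟩ := Finset.mem_filter.1 hσ1
            set j := (σ.2 : ℕ) with hj
            have hdσ : ni σ.1 = d := by rw [hσi]
            rw [hdσ] at hσlo
            have h1 : x * d ≤ j * n := by
              calc x * d ≤ (j * n / d) * d := Nat.mul_le_mul_right d hσlo
                _ ≤ j * n := Nat.div_mul_le_self _ _
            have hlo_le : lo ≤ j := by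
              have hstep : (x * d + n - 1) ≤ (n - 1) + j * n := by omega
              calc lo ≤ ((n - 1) + j * n) / n := Nat.div_le_div_right hstep
                _ = (n - 1) / n + j := Nat.add_mul_div_right _ _ hn0
                _ = j := by rw [Nat.div_eq_of_lt (by omega)]; omega
            have hbt : (j + 1) * n / ni σ.1 ∈ t σ :=
              Finset.mem_Ioc.2 ⟨fslhdSlot_lt σ (hni _) (hdn _), le_rfl⟩
            have hby : (j + 1) * n / d ≤ y := by
              have := hley _ (htsub σ hσs hbt)
              rw [hdσ] at this
              exact this
            have h2 : (j + 1) * n < (y + 1) * d :=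
              (Nat.div_lt_iff_lt_mul hd0).1 (by omega : (j + 1) * n / d < y + 1)
            have hjq : j < q := by
              have h3 : (j + 1) * n ≤ (y + 1) * d - 1 := by omega
              have h4 : j + 1 ≤ q := by
                calc j + 1 = ((j + 1) * n) / n := by rw [Nat.mul_div_cancel _ hn0]
                  _ ≤ ((y + 1) * d - 1) / n := Nat.div_le_div_right h3
              omega
            exact Finset.mem_Ico.2 ⟨hlo_le, hjq⟩
          · intro σ1 h1 σ2 h2 hval
            obtain ⟨i1, j1⟩ := σ1
            obtain ⟨i2, j2⟩ := σ2
            have hi1 : i1 = i := (Finset.mem_filter.1 h1).2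
            have hi2 : i2 = i := (Finset.mem_filter.1 h2).2
            subst hi1
            subst hi2
            simp only at hval
            exact congrArg _ (Fin.ext hval)
        -- arithmetic: conclude the per-fiber inequality
        have hq_up : n * q + 1 ≤ (y + 1) * d := by
          have h1 : q * n ≤ (y + 1) * d - 1 := Nat.div_mul_le_self _ _
          rw [Nat.mul_comm] at h1
          have h2 : 0 < (y + 1) * d := Nat.mul_pos (by omega) hd0
          omega
        have hlo_dn : x * d ≤ n * lo := by
          have h5 := Nat.lt_div_mul_add (a := x * d + n - 1) hn0
          have h6 : (x * d + n - 1) / n * n = n * lo := by rw [Nat.mul_comm]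
          omega
        rcases le_or_gt lo q with hlq | hlq
        · set c := (s1.filter (fun σ => σ.1 = i)).card with hc
          have hc1 : c + lo ≤ q := by omega
          have hc2 : n * (c + lo) ≤ n * q := Nat.mul_le_mul_left n hc1
          have hc3 : n * c + x * d + 1 ≤ (y + 1) * d := by
            have : n * (c + lo) = n * c + n * lo := by ring
            omega
          have hc4 : (y + 1) * d = x * d + (y - x + 1) * d := by
            have : y + 1 = x + (y - x + 1) := by omega
            rw [this, Nat.add_mul]
          omega
        · have hc0 : (s1.filter (fun σ => σ.1 = i)).card = 0 := by omega
          rw [hc0]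
          have : 0 < (y - x + 1) * d := Nat.mul_pos (by omega) hd0
          omega
      have hsum : n * s1.card + u ≤ (y - x + 1) * n := by
        calc n * s1.card + u
            = (∑ i : Fin u, n * (s1.filter (fun σ => σ.1 = i)).card) + u := by
              rw [hfib, Finset.mul_sum]
          _ = ∑ i : Fin u, (n * (s1.filter (fun σ => σ.1 = i)).card + 1) := by
              rw [Finset.sum_add_distrib, Finset.sum_const, Finset.card_univ,
                Fintype.card_fin, smul_eq_mul, mul_one]
          _ ≤ ∑ i : Fin u, (y - x + 1) * ni i := Finset.sum_le_sum (fun i _ => hper i)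
          _ = (y - x + 1) * n := by rw [← Finset.mul_sum, ← hn]
      by_contra hcon
      have h1 : y - x + 1 ≤ s1.card := by omega
      have h2 : (y - x + 1) * n ≤ n * s1.card := by
        calc (y - x + 1) * n = n * (y - x + 1) := Nat.mul_comm _ _
          _ ≤ n * s1.card := Nat.mul_le_mul_left n h1
      omega
    -- s1 is nonempty (the slot containing y is in it)
    have hs1ne : s1.Nonempty := by
      obtain ⟨σ, hσs, hyσ⟩ := Finset.mem_biUnion.1 hyB
      refine ⟨σ, Finset.mem_filter.2 ⟨hσs, ?_⟩⟩
      by_contra hσx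
      have hyIoc := Finset.mem_Ioc.1 hyσ
      have hxt : x ∈ t σ := Finset.mem_Ioc.2 ⟨by omega, by omega⟩
      exact hxnB (htsub σ hσs hxt)
    -- apply the induction hypothesis to s2
    have hs2lt : s2.card ≤ k := by
      have h1 : 1 ≤ s1.card := Finset.card_pos.2 hs1ne
      omega
    have hih := ih s2 hs2lt
    -- the union of s2's slots together with Icc (x+1) y sits inside B, disjointly
    have hsub : (s2.biUnion t) ∪ Finset.Icc (x + 1) y ⊆ B := by
      apply Finset.union_subset
      · apply Finset.biUnion_subset.2
        intro σ hσ
        exact htsub σ (Finset.mem_filter.1 hσ).1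
      · intro z hz
        have := Finset.mem_Icc.1 hz
        exact hfill z (by omega) this.2
    have hdisj : Disjoint (s2.biUnion t) (Finset.Icc (x + 1) y) := by
      rw [Finset.disjoint_left]
      intro z hz1 hz2
      obtain ⟨σ, hσ, hzσ⟩ := Finset.mem_biUnion.1 hz1
      have := hlow σ hσ z hzσ
      have := Finset.mem_Icc.1 hz2
      omega
    have hcardB : (s2.biUnion t).card + (y - x) ≤ B.card := by
      have h1 := Finset.card_le_card hsub
      rw [Finset.card_union_of_disjoint hdisj, Nat.card_Icc] at h1
      omega
    calc s.card = s1.card + s2.card := hcards.symm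
      _ ≤ (y - x) + (s2.biUnion t).card := by omega
      _ ≤ B.card := by omega

/-- Step 2 of the FSLHD construction: {1,...,n} can be partitioned into sets
H^1,...,H^u of sizes n_1,...,n_u on each of which h ↦ ⌈n_i·h/n⌉ is a bijection
onto {1,...,n_i}. -/
theorem exists_slice_partition (u : ℕ) (hu : 0 < u) (ni : Fin u → ℕ)
    (hni : ∀ i, 0 < ni i) (n : ℕ) (hn : n = ∑ i, ni i) :
    ∃ H : Fin u → Finset ℕ,
      (∀ i, H i ⊆ Finset.Icc 1 n) ∧
      (∀ i j, i ≠ j → Disjoint (H i) (H j)) ∧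
      (∀ x ∈ Finset.Icc 1 n, ∃ i, x ∈ H i) ∧
      (∀ i, (H i).card = ni i) ∧
      (∀ i, Set.BijOn (fun x : ℕ => ⌈(ni i * x : ℚ) / n⌉) ↑(H i)
        (Set.Icc 1 (ni i : ℤ))) := by
  have hn0 : 0 < n := by
    rw [hn]
    exact Finset.sum_pos (fun i _ => hni i) ⟨⟨0, hu⟩, Finset.mem_univ _⟩
  have hdn : ∀ i, ni i ≤ n := by
    intro i
    rw [hn]
    exact Finset.single_le_sum (fun i _ => Nat.zero_le _) (Finset.mem_univ i)
  obtain ⟨f, hfinj, hft⟩ :=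
    (Finset.all_card_le_biUnion_card_iff_exists_injective (fslhdSlot u ni n)).1
      (fslhd_hall hu hni hn)
  -- basic facts about f
  have hbounds : ∀ σ : Σ i : Fin u, Fin (ni i),
      (σ.2 : ℕ) * n < ni σ.1 * f σ ∧ ni σ.1 * f σ ≤ ((σ.2 : ℕ) + 1) * n := by
    intro σ
    have h := Finset.mem_Ioc.1 (hft σ)
    have hd0 : 0 < ni σ.1 := hni σ.1
    constructor
    · have := (Nat.div_lt_iff_lt_mul hd0).1 h.1
      calc (σ.2 : ℕ) * n < f σ * ni σ.1 := this
        _ = ni σ.1 * f σ := Nat.mul_comm _ _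
    · have := (Nat.le_div_iff_mul_le hd0).1 h.2
      calc ni σ.1 * f σ = f σ * ni σ.1 := Nat.mul_comm _ _
        _ ≤ ((σ.2 : ℕ) + 1) * n := this
  have hmem : ∀ σ : Σ i : Fin u, Fin (ni i), f σ ∈ Finset.Icc 1 n := by
    intro σ
    obtain ⟨h1, h2⟩ := hbounds σ
    have hd0 : 0 < ni σ.1 := hni σ.1
    refine Finset.mem_Icc.2 ⟨?_, ?_⟩
    · by_contra hc
      have : f σ = 0 := by omega
      rw [this, Nat.mul_zero] at h1
      omega
    · by_contra hc
      push_neg at hc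
      have h3 : ((σ.2 : ℕ) + 1) ≤ ni σ.1 := σ.2.isLt
      have : ni σ.1 * f σ ≥ ni σ.1 * (n + 1) := Nat.mul_le_mul_left _ (by omega)
      have : ni σ.1 * (n + 1) ≤ ((σ.2 : ℕ) + 1) * n := by omega
      have : ni σ.1 * n + ni σ.1 ≤ ni σ.1 * n := by
        calc ni σ.1 * n + ni σ.1 = ni σ.1 * (n + 1) := by ring
          _ ≤ ((σ.2 : ℕ) + 1) * n := this
          _ ≤ ni σ.1 * n := Nat.mul_le_mul_right _ h3
      omega
  -- the ceiling value of f ⟨i, j⟩ is j + 1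
  have hceil : ∀ (i : Fin u) (j : Fin (ni i)),
      ⌈(ni i * (f ⟨i, j⟩) : ℚ) / n⌉ = (j : ℕ) + 1 := by
    intro i j
    obtain ⟨h1, h2⟩ := hbounds ⟨i, j⟩
    rw [Int.ceil_eq_iff]
    have hnQ : (0 : ℚ) < n := by exact_mod_cast hn0
    constructor
    · rw [lt_div_iff₀ hnQ]
      push_cast
      have : ((j : ℕ) : ℚ) * n < (ni i : ℚ) * (f ⟨i, j⟩ : ℚ) := by exact_mod_cast h1
      push_cast at this
      linarith
    · rw [div_le_iff₀ hnQ]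
      push_cast
      have : (ni i : ℚ) * (f ⟨i, j⟩ : ℚ) ≤ (((j : ℕ) : ℚ) + 1) * n := by exact_mod_cast h2
      linarith
  -- define the partition
  refine ⟨fun i => Finset.image (fun j => f ⟨i, j⟩) Finset.univ, ?_, ?_, ?_, ?_, ?_⟩
  · intro i h hh
    obtain ⟨j, _, rfl⟩ := Finset.mem_image.1 hh
    exact hmem ⟨i, j⟩
  · intro i j hij
    rw [Finset.disjoint_left]
    intro a ha hb
    obtain ⟨j1, _, h1⟩ := Finset.mem_image.1 ha
    obtain ⟨j2, _, h2⟩ := Finset.mem_image.1 hb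
    have : (⟨i, j1⟩ : Σ i : Fin u, Fin (ni i)) = ⟨j, j2⟩ := hfinj (h1.trans h2.symm)
    exact hij (congrArg Sigma.fst this)
  · -- coverage via cardinality
    intro z hz
    have hcard : (Finset.univ.image f).card = n := by
      rw [Finset.card_image_of_injective _ hfinj, Finset.card_univ]
      rw [Fintype.card_sigma]
      simp only [Fintype.card_fin]
      exact hn.symm
    have hsub : Finset.univ.image f ⊆ Finset.Icc 1 n := by
      intro z hz
      obtain ⟨σ, _, rfl⟩ := Finset.mem_image.1 hz
      exact hmem σ
    have heq : Finset.univ.image f = Finset.Icc 1 n := by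
      apply Finset.eq_of_subset_of_card_le hsub
      rw [hcard, Nat.card_Icc]
      omega
    rw [← heq] at hz
    obtain ⟨σ, _, rfl⟩ := Finset.mem_image.1 hz
    exact ⟨σ.1, Finset.mem_image.2 ⟨σ.2, Finset.mem_univ _, rfl⟩⟩
  · intro i
    rw [Finset.card_image_of_injective _ (fun j1 j2 h => by
      have : (⟨i, j1⟩ : Σ i : Fin u, Fin (ni i)) = ⟨i, j2⟩ := hfinj h
      exact eq_of_heq (Sigma.mk.inj_iff.1 this).2)]
    simp
  · intro i
    refine ⟨?_, ?_, ?_⟩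
    · intro z hz
      obtain ⟨j, _, rfl⟩ := Finset.mem_image.1 hz
      simp only [Set.mem_Icc]
      rw [hceil i j]
      have := j.isLt
      constructor
      · omega
      · omega
    · intro a ha b hb hab
      obtain ⟨j1, _, h1⟩ := Finset.mem_image.1 ha
      obtain ⟨j2, _, h2⟩ := Finset.mem_image.1 hb
      rw [← h1, ← h2] at hab ⊢
      simp only at hab
      rw [hceil i j1, hceil i j2] at hab
      have hj : (j1 : ℕ) = (j2 : ℕ) := by omega
      rw [Fin.ext hj]
    · intro z hz
      obtain ⟨hz1, hz2⟩ := hz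
      have hj : z.toNat - 1 < ni i := by omega
      refine ⟨f ⟨i, ⟨z.toNat - 1, hj⟩⟩, ?_, ?_⟩
      · exact Finset.mem_image.2 ⟨⟨z.toNat - 1, hj⟩, Finset.mem_univ _, rfl⟩
      · simp only
        rw [hceil i ⟨z.toNat - 1, hj⟩]
        simp only
        omega
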